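/- Let (f, X) be an i.i.d. random iteration where each f_α : S → S is Lipschitz with constant c(α), and suppose ∫ log c dν < 0 (negative average log-Lipschitz constant). Then there exist a measurable C : Ω → [0,∞) and λ < 1 such that for ℙ-a.e. ω and all x, y ∈ S and all n, d(f_ω^n(x), f_ω^n(y)) ≤ C(ω) λⁿ d(x, y). -/

import Mathlib

open MeasureTheory Filter

variable {Ω E S : Type*}

/-- Forward composition `f_ω^n = f_{X (n-1) ω} ∘ ⋯ ∘ f_{X 0 ω}`. -/
def fwdComp (f : E → S → S) (X : ℕ → Ω → E) (ω : Ω) : ℕ → S → S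
  | 0 => id
  | n + 1 => f (X n ω) ∘ fwdComp f X ω n

/-- Negative average log-Lipschitz constant implies exponentially fast contraction: if each
`f_α` is `c α`-Lipschitz and `∫ log c dν < 0`, then there are a measurable `C : Ω → [0,∞)`
and `λ < 1` with `d(f_ω^n x, f_ω^n y) ≤ C ω * λ^n * d(x,y)` a.s., for all `x, y, n`. -/
theorem stmt14 [MeasurableSpace Ω] [MeasurableSpace E] [MetricSpace S]
    (ℙ : Measure Ω) [IsProbabilityMeasure ℙ] (ν : Measure E) [IsProbabilityMeasure ν]
    (X : ℕ → Ω → E) (hXmeas : ∀ n, Measurable (X n))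
    (hindep : ProbabilityTheory.iIndepFun X ℙ)
    (hdist : ∀ n, Measure.map (X n) ℙ = ν)
    (f : E → S → S) (c : E → ℝ) (hcpos : ∀ α, 0 < c α) (hcmeas : Measurable c)
    (hLip : ∀ α, ∀ x y : S, dist (f α x) (f α y) ≤ c α * dist x y)
    (hint : Integrable (fun α => Real.log (c α)) ν)
    (hneg : ∫ α, Real.log (c α) ∂ν < 0) :
    ∃ (C : Ω → ℝ) (lam : ℝ), Measurable C ∧ (∀ ω, 0 ≤ C ω) ∧ lam < 1 ∧
      ∀ᵐ ω ∂ℙ, ∀ x y : S, ∀ n : ℕ,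
        dist (fwdComp f X ω n x) (fwdComp f X ω n y) ≤ C ω * lam ^ n * dist x y := by
  classical
  set m : ℝ := ∫ α, Real.log (c α) ∂ν with hm
  set lam : ℝ := Real.exp (m / 2) with hlam
  have hlampos : 0 < lam := Real.exp_pos _
  have hlamlt : lam < 1 := Real.exp_lt_one_iff.2 (by linarith)
  set Y : ℕ → Ω → ℝ := fun n ω => Real.log (c (X n ω)) with hY
  have hφmeas : Measurable (fun α => Real.log (c α)) := Real.measurable_log.comp hcmeas
  have hYmeas : ∀ n, Measurable (Y n) := fun n => hφmeas.comp (hXmeas n)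
  have hYint : Integrable (Y 0) ℙ := by
    have := hint
    rw [← hdist 0, integrable_map_measure hφmeas.aestronglyMeasurable
      (hXmeas 0).aemeasurable] at this
    exact this
  have hXid : ∀ n, ProbabilityTheory.IdentDistrib (X n) (X 0) ℙ ℙ :=
    fun n => ⟨(hXmeas n).aemeasurable, (hXmeas 0).aemeasurable, by rw [hdist n, hdist 0]⟩
  have hYid : ∀ n, ProbabilityTheory.IdentDistrib (Y n) (Y 0) ℙ ℙ :=
    fun n => (hXid n).comp hφmeas
  have hYindep : Pairwise (Function.onFun (ProbabilityTheory.IndepFun · · ℙ) Y) := by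
    intro i j hij
    exact (hindep.indepFun hij).comp hφmeas hφmeas
  have hEY : (∫ ω, Y 0 ω ∂ℙ) = m := by
    rw [hm, ← hdist 0, integral_map (hXmeas 0).aemeasurable hφmeas.aestronglyMeasurable]
  have hSLLN := ProbabilityTheory.strong_law_ae_real Y hYint hYindep hYid
  rw [hEY] at hSLLN
  -- sums and products
  set P : ℕ → Ω → ℝ := fun n ω => ∏ i ∈ Finset.range n, c (X i ω) with hP
  have hPpos : ∀ n ω, 0 < P n ω := fun n ω => Finset.prod_pos (fun i _ => hcpos _)
  have hPexp : ∀ n ω, P n ω = Real.exp (∑ i ∈ Finset.range n, Y i ω) := by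
    intro n ω
    rw [Real.exp_sum]
    exact Finset.prod_congr rfl (fun i _ => (Real.exp_log (hcpos _)).symm)
  set g : ℕ → Ω → ℝ := fun n ω => P n ω / lam ^ n with hg
  have hgpos : ∀ n ω, 0 < g n ω := fun n ω => div_pos (hPpos n ω) (pow_pos hlampos n)
  have hgmeas : ∀ n, Measurable (g n) := by
    intro n
    exact (Finset.measurable_prod _ (fun i _ => hcmeas.comp (hXmeas i))).div measurable_const
  set C : Ω → ℝ := fun ω => (∑' n, ENNReal.ofReal (g n ω)).toReal with hC
  refine ⟨C, lam, ?_, fun ω => ENNReal.toReal_nonneg, hlamlt, ?_⟩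
  · exact (Measurable.ennreal_tsum fun n =>
      ENNReal.measurable_ofReal.comp (hgmeas n)).ennreal_toReal
  -- Lipschitz iteration bound
  have hiter : ∀ ω (x y : S) (n : ℕ),
      dist (fwdComp f X ω n x) (fwdComp f X ω n y) ≤ P n ω * dist x y := by
    intro ω x y n
    induction n with
    | zero => simp [fwdComp, hP]
    | succ n ih =>
      calc dist (fwdComp f X ω (n+1) x) (fwdComp f X ω (n+1) y)
          ≤ c (X n ω) * dist (fwdComp f X ω n x) (fwdComp f X ω n y) := hLip _ _ _
        _ ≤ c (X n ω) * (P n ω * dist x y) := by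
            exact mul_le_mul_of_nonneg_left ih (hcpos _).le
        _ = P (n+1) ω * dist x y := by
            rw [hP]; simp [Finset.prod_range_succ]; ring
  filter_upwards [hSLLN] with ω hω
  -- summability of g · ω
  have hr : (0:ℝ) < Real.exp (m / 4) := Real.exp_pos _
  have hrlt : Real.exp (m / 4) < 1 := Real.exp_lt_one_iff.2 (by linarith)
  have hev : ∀ᶠ n : ℕ in atTop, g n ω ≤ Real.exp (m / 4) ^ n := by
    have h1 : ∀ᶠ n : ℕ in atTop,
        (∑ i ∈ Finset.range n, Y i ω) / n < 3 * m / 4 :=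
      hω.eventually_lt_const (by linarith)
    filter_upwards [h1, eventually_gt_atTop 0] with n hn hn0
    have hnpos : (0:ℝ) < n := Nat.cast_pos.2 hn0
    have hsum : (∑ i ∈ Finset.range n, Y i ω) ≤ n * (3 * m / 4) := by
      have := (div_lt_iff₀ hnpos).1 hn
      linarith
    have key : g n ω = Real.exp ((∑ i ∈ Finset.range n, Y i ω) - (n:ℝ) * (m / 2)) := by
      rw [Real.exp_sub, ← hPexp n ω, Real.exp_nat_mul]
    rw [key, ← Real.exp_nat_mul]
    apply Real.exp_le_exp.2
    have h2 : (n:ℝ) * (m / 4) = n * (3 * m / 4) - n * (m / 2) := by ring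
    rw [h2]
    linarith
  have hsummable : Summable (fun n => g n ω) := by
    obtain ⟨N, hN⟩ := eventually_atTop.1 hev
    rw [← summable_nat_add_iff N]
    have hs2 : Summable (fun n : ℕ => Real.exp (m / 4) ^ n * Real.exp (m / 4) ^ N) :=
      (summable_geometric_of_lt_one hr.le hrlt).mul_right _
    refine Summable.of_nonneg_of_le (fun n => (hgpos _ ω).le) (fun n => ?_) hs2
    calc g (n + N) ω ≤ Real.exp (m / 4) ^ (n + N) := hN _ (Nat.le_add_left _ _)
      _ = _ := pow_add _ _ _
  have hCω : C ω = ∑' n, g n ω := by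
    simp only [hC]
    rw [← ENNReal.ofReal_tsum_of_nonneg (fun n => (hgpos n ω).le) hsummable,
      ENNReal.toReal_ofReal (tsum_nonneg (fun n => (hgpos n ω).le))]
  intro x y n
  have hle : g n ω ≤ C ω := by
    rw [hCω]
    exact Summable.le_tsum hsummable n (fun j _ => (hgpos j ω).le)
  have hPle : P n ω ≤ C ω * lam ^ n := by
    have := mul_le_mul_of_nonneg_right hle (pow_pos hlampos n).le
    rwa [hg, div_mul_cancel₀] at this
    exact (pow_pos hlampos n).ne'
  calc dist (fwdComp f X ω n x) (fwdComp f X ω n y) ≤ P n ω * dist x y := hiter ω x y n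
    _ ≤ C ω * lam ^ n * dist x y := mul_le_mul_of_nonneg_right hPle dist_nonneg
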